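/- For all f ∈ (-81/2500, 0), every complex root of the quintic p_f(z) = z^5 + z^4 - f z + f has modulus strictly less than one. -/

import Mathlib

theorem stmt_14 (f : ℝ) (hf : f ∈ Set.Ioo (-81 / 2500 : ℝ) 0) :
    ∀ z : ℂ, z ^ 5 + z ^ 4 - (f : ℂ) * z + (f : ℂ) = 0 →
      ‖z‖ < 1 := by
  obtain ⟨hf1, hf2⟩ := hf
  intro z hz
  by_contra hcon
  push_neg at hcon
  set a : ℝ := -f with ha
  have ha0 : 0 < a := by simp [ha]; linarith
  have ha1 : a < 81/2500 := by simp [ha]; linarith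
  set w : ℂ := z + 1 with hw
  set B : ℂ := z ^ 4 - (f : ℂ) with hB
  have key : w * B = 2 * (a : ℂ) := by
    rw [hw, hB, ha]
    push_cast
    linear_combination hz
  -- abs facts
  set W : ℝ := ‖w‖ with hWdef
  have W0 : 0 ≤ W := norm_nonneg w
  have habsf : ‖(f : ℂ)‖ = a := by
    rw [Complex.norm_real, Real.norm_eq_abs, abs_of_neg hf2]
  have habs : W * ‖B‖ = 2 * a := by
    rw [hWdef, ← norm_mul, key]
    have : (2 * (a : ℂ)) = ((2 * a : ℝ) : ℂ) := by push_cast; ring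
    rw [this, Complex.norm_real, Real.norm_eq_abs, abs_of_pos (by linarith)]
  have hz4 : (1:ℝ) ≤ ‖z ^ 4‖ := by
    rw [norm_pow]
    exact one_le_pow₀ hcon
  have hBlow : 1 - a ≤ ‖B‖ := by
    have t1 : ‖z ^ 4‖ ≤ ‖B‖ + ‖(f : ℂ)‖ := by
      have : z ^ 4 = B + (f : ℂ) := by rw [hB]; ring
      rw [this]
      exact norm_add_le _ _
    rw [habsf] at t1
    linarith
  have hWsmall : W ≤ 7/100 := by
    have h1 : W * (1 - a) ≤ W * ‖B‖ :=
      mul_le_mul_of_nonneg_left hBlow W0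
    rw [habs] at h1
    nlinarith
  -- bound |z^4 - 1|
  have hfac : z ^ 4 - 1 = w ^ 4 - 4 * w ^ 3 + 6 * w ^ 2 - 4 * w := by
    rw [hw]; ring
  have h41 : ‖z ^ 4 - 1‖ ≤ W ^ 4 + 4 * W ^ 3 + 6 * W ^ 2 + 4 * W := by
    rw [hfac]
    calc ‖w ^ 4 - 4 * w ^ 3 + 6 * w ^ 2 - 4 * w‖
        = ‖(w ^ 4 + (-(4 * w ^ 3))) + (6 * w ^ 2 + (-(4 * w)))‖ := by
          ring_nf
      _ ≤ ‖w ^ 4 + (-(4 * w ^ 3))‖ + ‖6 * w ^ 2 + (-(4 * w))‖ :=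
          norm_add_le _ _
      _ ≤ (‖w ^ 4‖ + ‖-(4 * w ^ 3)‖)
          + (‖6 * w ^ 2‖ + ‖-(4 * w)‖) :=
          add_le_add (norm_add_le _ _) (norm_add_le _ _)
      _ = W ^ 4 + 4 * W ^ 3 + 6 * W ^ 2 + 4 * W := by
          simp [norm_mul, norm_pow, ← hWdef]
          ring
  have h42 : ‖z ^ 4 - 1‖ ≤ 7/20 := by
    nlinarith [pow_le_pow_left₀ W0 hWsmall 2, pow_le_pow_left₀ W0 hWsmall 3,
      pow_le_pow_left₀ W0 hWsmall 4]
  -- real part of B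
  have hrez4 : (13:ℝ)/20 ≤ (z ^ 4).re := by
    have h1 : -‖z ^ 4 - 1‖ ≤ (z ^ 4 - 1).re := by
      have h0 := Complex.abs_re_le_norm (z ^ 4 - 1)
      have h0' := neg_abs_le (z ^ 4 - 1).re
      linarith
    have h2 : (z ^ 4 - 1).re = (z ^ 4).re - 1 := by simp
    linarith
  have hBre : B.re = (z ^ 4).re + a := by
    rw [hB, ha]; simp; ring
  -- now the normSq / re identities
  have hBne : B ≠ 0 := by
    intro h0
    rw [h0, mul_zero] at key
    have : (a:ℂ) ≠ 0 := by exact_mod_cast ne_of_gt ha0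
    simp at key
    exact this (by exact_mod_cast key)
  set N : ℝ := Complex.normSq B with hN
  have hN0 : 0 < N := Complex.normSq_pos.mpr hBne
  have e2 : w * (N : ℂ) = 2 * (a : ℂ) * (starRingEnd ℂ) B := by
    calc w * (N : ℂ) = w * (B * (starRingEnd ℂ) B) := by rw [hN, Complex.mul_conj]
      _ = (w * B) * (starRingEnd ℂ) B := by ring
      _ = 2 * (a : ℂ) * (starRingEnd ℂ) B := by rw [key]
  have e3 : w.re * N = 2 * a * B.re := by
    have := congrArg Complex.re e2
    simpa [Complex.mul_re, Complex.conj_re, Complex.conj_im] using this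
  have e4 : Complex.normSq w * N = 4 * a ^ 2 := by
    have := congrArg Complex.normSq key
    rw [map_mul] at this
    rw [hN, this]
    have : Complex.normSq (2 * (a:ℂ)) = 4 * a ^ 2 := by
      have : (2 * (a:ℂ)) = ((2*a : ℝ) : ℂ) := by push_cast; ring
      rw [this, Complex.normSq_ofReal]; ring
    rw [this]
  -- |z| >= 1 gives 2 * w.re <= normSq w
  have hge : 2 * w.re ≤ Complex.normSq w := by
    have h1 : (1:ℝ) ≤ Complex.normSq z := by
      have := Complex.sq_norm z
      nlinarith [Complex.sq_norm z]
    have h2 : Complex.normSq z = Complex.normSq w - 2 * w.re + 1 := by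
      rw [hw, Complex.normSq_apply, Complex.normSq_apply]
      simp [Complex.add_re, Complex.add_im]
      ring
    linarith
  -- contradiction
  have hfinal : 2 * w.re * N ≤ Complex.normSq w * N :=
    mul_le_mul_of_nonneg_right hge hN0.le
  rw [e4] at hfinal
  have : 2 * (2 * a * B.re) ≤ 4 * a ^ 2 := by nlinarith [e3]
  rw [hBre] at this
  nlinarith
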